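/- arXiv:1105.2414 — 2 statements merged into one kernel-verified Lean document; each statement's English description precedes it below -/
import Mathlib

section
/- For every K with 0 < K < 2, the cubic equation (2-K)^3 m^3 - 4(2-K) m^2 - 4(2-K) m + 8 = 0 has exactly one root m in the open interval (0, 2/(2-K)). -/
lemma key_ineq (x y : ℝ) (hx : 0 < x) (hxy : x < y) (hy : y < 2)
    (hQ : x^2*y^2 + 4*(x*y) - 8*(x+y) = 0) : False := by
  have hy0 : 0 < y := hx.trans hxy
  have hp : 0 < x*y := mul_pos hx hy0
  have hp4 : x*y < 4 := by nlinarith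
  have hs2 : (x+y)^2 > 4*(x*y) := by nlinarith [pow_pos (sub_pos.mpr hxy) 2]
  have e : 8*(x+y) = (x*y)^2 + 4*(x*y) := by linarith
  nlinarith [e, hs2, hp, hp4, sq_nonneg ((x*y)^2 + 4*(x*y)),
    mul_pos (sub_pos.mpr hp4) (show (0:ℝ) < (x*y)^2 + 12*(x*y) + 64 by positivity)]

lemma uniq_aux (c a b : ℝ) (hc0 : 0 < c) (hc2 : c < 2)
    (ha : 0 < a) (hab : a < b) (hb : b < 2 / c)
    (fa : c ^ 3 * a ^ 3 - 4 * c * a ^ 2 - 4 * c * a + 8 = 0)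
    (fb : c ^ 3 * b ^ 3 - 4 * c * b ^ 2 - 4 * c * b + 8 = 0) : False := by
  have hx : 0 < c * a := mul_pos hc0 ha
  have hxy : c * a < c * b := mul_lt_mul_of_pos_left hab hc0
  have hy : c * b < 2 := by
    have := mul_lt_mul_of_pos_left hb hc0
    calc c * b < c * (2 / c) := this
    _ = 2 := by field_simp
  set x := c * a with hxdef
  set y := c * b with hydef
  have eqx : c * (x^3 - 4*x + 8) = 4*x^2 := by
    rw [hxdef]; linear_combination c * fa
  have eqy : c * (y^3 - 4*y + 8) = 4*y^2 := by
    rw [hydef]; linear_combination c * fb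
  clear_value x y
  have cross : 4*x^2 * (y^3 - 4*y + 8) = 4*y^2 * (x^3 - 4*x + 8) := by
    have h1 : c * (x^3 - 4*x + 8) * (y^3 - 4*y + 8) = 4*x^2 * (y^3 - 4*y + 8) := by
      linear_combination (y^3 - 4*y + 8) * eqx
    have h2 : c * (x^3 - 4*x + 8) * (y^3 - 4*y + 8) = 4*y^2 * (x^3 - 4*x + 8) := by
      linear_combination (x^3 - 4*x + 8) * eqy
    linarith
  have hQQ : (y - x) * (x^2*y^2 + 4*(x*y) - 8*(x+y)) = 0 := by linear_combination cross/4
  have hQ : x^2*y^2 + 4*(x*y) - 8*(x+y) = 0 := by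
    rcases mul_eq_zero.mp hQQ with h | h
    · linarith
    · exact h
  exact key_ineq x y hx hxy hy hQ

theorem unique_root_of_cubic (K : ℝ) (hK0 : 0 < K) (hK2 : K < 2) :
    ∃! m : ℝ, (0 < m ∧ m < 2 / (2 - K)) ∧
      (2 - K) ^ 3 * m ^ 3 - 4 * (2 - K) * m ^ 2 - 4 * (2 - K) * m + 8 = 0 := by
  set c := 2 - K with hcdef
  have hc0 : 0 < c := by simp [hcdef]; linarith
  have hc2 : c < 2 := by simp [hcdef]; linarith
  have hcont : ContinuousOn (fun m : ℝ => c ^ 3 * m ^ 3 - 4 * c * m ^ 2 - 4 * c * m + 8)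
      (Set.Icc 0 (2 / c)) := by fun_prop
  have hle : (0:ℝ) ≤ 2 / c := by positivity
  have hmem : (0:ℝ) ∈ Set.Ioo
      ((fun m : ℝ => c ^ 3 * m ^ 3 - 4 * c * m ^ 2 - 4 * c * m + 8) (2 / c))
      ((fun m : ℝ => c ^ 3 * m ^ 3 - 4 * c * m ^ 2 - 4 * c * m + 8) 0) := by
    constructor
    · show c ^ 3 * (2/c) ^ 3 - 4 * c * (2/c) ^ 2 - 4 * c * (2/c) + 8 < 0
      have h1 : c ^ 3 * (2/c) ^ 3 - 4 * c * (2/c) ^ 2 - 4 * c * (2/c) + 8 = 8 - 16 / c := by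
        field_simp; ring
      rw [h1]
      have : 8 < 16 / c := by
        rw [lt_div_iff₀ hc0]; nlinarith
      linarith
    · norm_num
  obtain ⟨m, hm, hfm⟩ := intermediate_value_Ioo' hle hcont hmem
  refine ⟨m, ⟨⟨hm.1, hm.2⟩, hfm⟩, ?_⟩
  rintro n ⟨⟨hn0, hn2⟩, hfn⟩
  by_contra hne
  rcases lt_or_gt_of_ne hne with h | h
  · exact uniq_aux c n m hc0 hc2 hn0 h hm.2 hfn hfm
  · exact uniq_aux c m n hc0 hc2 hm.1 h hn2 hfm hfn
end

section
/- If λ satisfies λ = ((K/(2λ))·Σ) / ((K²/(4λ²))·Σ + σ²) with λ > 0, Σ > 0, σ > 0 and 0 < K < 2, then λ = √(K(2-K)Σ)/(2σ). -/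
theorem lambda_last_period (K S σ lam : ℝ) (hK0 : 0 < K) (hK2 : K < 2)
    (hS : 0 < S) (hσ : 0 < σ) (hlam : 0 < lam)
    (heq : lam = (K / (2 * lam) * S) / (K ^ 2 / (4 * lam ^ 2) * S + σ ^ 2)) :
    lam = Real.sqrt (K * (2 - K) * S) / (2 * σ) := by
  have hden : K ^ 2 / (4 * lam ^ 2) * S + σ ^ 2 > 0 := by positivity
  have h2 : lam ^ 2 * (2 * σ) ^ 2 = K * (2 - K) * S := by
    field_simp at heq
    have hl2 : (2*lam^2) ≠ 0 := by positivity
    apply mul_left_cancel₀ hl2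
    linear_combination lam ^ 2 * heq
  have hsq : Real.sqrt (K * (2 - K) * S) = lam * (2 * σ) := by
    rw [show K * (2 - K) * S = (lam * (2 * σ)) ^ 2 by nlinarith]
    exact Real.sqrt_sq (by positivity)
  rw [hsq]
  field_simp
end
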